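/- For every d ∈ ℕ there exists C > 0 such that if f(x) = w₁(x)e^{w₂(x)} is a probability density on (0,∞), where w₁, w₂ are finite sums of power functions, all powers in w₂ are positive with highest power d, w₁ > 0 on (0,∞), then for all x ∈ (0,∞): |f'(x)/f(x) · x| ≤ C·max{1, x^d}. -/

import Mathlib

open MeasureTheory Set

open Filter

lemma fiber_sum {n : ℕ} (A p : Fin n → ℝ) (x : ℝ) :
    ∑ i, A i * x ^ (p i)
      = ∑ r ∈ Finset.image p Finset.univ,
          (∑ i ∈ Finset.univ.filter (fun i => p i = r), A i) * x ^ r := by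
  rw [← Finset.sum_fiberwise_of_maps_to
      (fun i _ => Finset.mem_image_of_mem p (Finset.mem_univ i))
      (fun i => A i * x ^ (p i))]
  refine Finset.sum_congr rfl (fun r _ => ?_)
  rw [Finset.sum_mul]
  refine Finset.sum_congr rfl (fun i hi => ?_)
  rw [(Finset.mem_filter.mp hi).2]

lemma ratio_bounded {n : ℕ} (a p : Fin n → ℝ) (w : ℝ → ℝ)
    (hw : ∀ x, w x = ∑ i, a i * x ^ (p i))
    (hwpos : ∀ x ∈ Ioi (0:ℝ), 0 < w x) :
    ∃ C : ℝ, 0 < C ∧ ∀ x ∈ Ioi (0:ℝ), |(∑ i, a i * p i * x ^ (p i)) / w x| ≤ C := by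
  classical
  set c : ℝ → ℝ := fun r => ∑ i ∈ Finset.univ.filter (fun i => p i = r), a i with hc
  set s : Finset ℝ := (Finset.image p Finset.univ).filter (fun r => c r ≠ 0) with hs
  -- w as grouped sum
  have key1 : ∀ x : ℝ, w x = ∑ r ∈ s, c r * x ^ r := by
    intro x
    rw [hw, fiber_sum]
    refine (Finset.sum_subset (Finset.filter_subset _ _) (fun r hr hrs => ?_)).symm
    have : c r = 0 := by
      by_contra h
      exact hrs (Finset.mem_filter.mpr ⟨hr, h⟩)
    simp only [mul_eq_zero]
    exact Or.inl (by simpa using this)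
  have key2 : ∀ x : ℝ, (∑ i, a i * p i * x ^ (p i)) = ∑ r ∈ s, (c r * r) * x ^ r := by
    intro x
    have := fiber_sum (fun i => a i * p i) p x
    rw [this]
    have fib : ∀ r : ℝ, (∑ i ∈ Finset.univ.filter (fun i => p i = r), a i * p i) = c r * r := by
      intro r
      rw [hc, Finset.sum_mul]
      refine Finset.sum_congr rfl (fun i hi => ?_)
      rw [(Finset.mem_filter.mp hi).2]
    simp only [fib]
    refine (Finset.sum_subset (Finset.filter_subset _ _) (fun r hr hrs => ?_)).symm
    have : c r = 0 := by
      by_contra h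
      exact hrs (Finset.mem_filter.mpr ⟨hr, h⟩)
    simp only [mul_eq_zero]
    exact Or.inl (Or.inl (by simpa using this))
  have hne : s.Nonempty := by
    by_contra h
    rw [Finset.not_nonempty_iff_eq_empty] at h
    have := hwpos 1 (by norm_num)
    rw [key1 1, h] at this
    simp at this
  set M := s.max' hne with hM
  set m := s.min' hne with hm
  have hMs : M ∈ s := s.max'_mem hne
  have hms : m ∈ s := s.min'_mem hne
  have hcM : c M ≠ 0 := (Finset.mem_filter.mp hMs).2
  have hcm : c m ≠ 0 := (Finset.mem_filter.mp hms).2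
  -- limits at infinity
  have tendsto_term_top : ∀ r ∈ s, Tendsto (fun x : ℝ => c r * x ^ (r - M)) atTop
      (nhds (if r = M then c r else 0)) := by
    intro r hr
    rcases eq_or_ne r M with h | h
    · rw [if_pos h, h]
      simp only [sub_self]
      refine Tendsto.congr' ?_ tendsto_const_nhds
      filter_upwards [eventually_gt_atTop (0:ℝ)] with x hx
      rw [Real.rpow_zero, mul_one]
    · simp only [if_neg h]
      have hrM : r < M := lt_of_le_of_ne (s.le_max' r hr) h
      have : Tendsto (fun x : ℝ => x ^ (-(M - r))) atTop (nhds 0) :=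
        tendsto_rpow_neg_atTop (by linarith)
      have := this.const_mul (c r)
      simpa [neg_sub] using this
  have tendstoW : Tendsto (fun x : ℝ => w x * x ^ (-M)) atTop (nhds (c M)) := by
    have h1 : Tendsto (fun x : ℝ => ∑ r ∈ s, c r * x ^ (r - M)) atTop
        (nhds (∑ r ∈ s, if r = M then c r else 0)) :=
      tendsto_finset_sum s tendsto_term_top
    rw [Finset.sum_ite_eq' s M (fun r => c r), if_pos hMs] at h1
    refine h1.congr' ?_
    filter_upwards [eventually_gt_atTop (0:ℝ)] with x hx
    rw [key1, Finset.sum_mul]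
    refine Finset.sum_congr rfl (fun r _ => ?_)
    rw [Real.rpow_sub hx, Real.rpow_neg hx.le]
    ring
  have tendstoH : Tendsto (fun x : ℝ => (∑ i, a i * p i * x ^ (p i)) * x ^ (-M)) atTop
      (nhds (c M * M)) := by
    have tterm : ∀ r ∈ s, Tendsto (fun x : ℝ => (c r * r) * x ^ (r - M)) atTop
        (nhds (if r = M then c r * r else 0)) := by
      intro r hr
      rcases eq_or_ne r M with h | h
      · rw [if_pos h, h]
        simp only [sub_self]
        refine Tendsto.congr' ?_ tendsto_const_nhds
        filter_upwards [eventually_gt_atTop (0:ℝ)] with x hx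
        rw [Real.rpow_zero, mul_one]
      · simp only [if_neg h]
        have hrM : r < M := lt_of_le_of_ne (s.le_max' r hr) h
        have : Tendsto (fun x : ℝ => x ^ (-(M - r))) atTop (nhds 0) :=
          tendsto_rpow_neg_atTop (by linarith)
        have := this.const_mul (c r * r)
        simpa [neg_sub] using this
    have h1 := tendsto_finset_sum s tterm
    rw [Finset.sum_ite_eq' s M (fun r => c r * r), if_pos hMs] at h1
    refine h1.congr' ?_
    filter_upwards [eventually_gt_atTop (0:ℝ)] with x hx
    rw [key2, Finset.sum_mul]
    refine Finset.sum_congr rfl (fun r _ => ?_)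
    rw [Real.rpow_sub hx, Real.rpow_neg hx.le]
    ring
  have hcMpos : 0 < c M := by
    have hge : (0:ℝ) ≤ c M := by
      refine ge_of_tendsto tendstoW ?_
      filter_upwards [eventually_gt_atTop (0:ℝ)] with x hx
      exact le_of_lt (mul_pos (hwpos x hx) (Real.rpow_pos_of_pos hx _))
    exact lt_of_le_of_ne hge (Ne.symm hcM)
  have tendstoG_top : Tendsto (fun x : ℝ => (∑ i, a i * p i * x ^ (p i)) / w x) atTop
      (nhds M) := by
    have := tendstoH.div tendstoW hcM
    have heq : c M * M / c M = M := by field_simp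
    rw [heq] at this
    refine this.congr' ?_
    filter_upwards [eventually_gt_atTop (0:ℝ)] with x hx
    simp only [Pi.div_apply]
    rw [mul_div_mul_right _ _ (ne_of_gt (Real.rpow_pos_of_pos hx (-M)))]
  -- limits at zero
  have tendstoW0 : Tendsto (fun x : ℝ => w x * x ^ (-m)) (nhdsWithin 0 (Ioi 0))
      (nhds (c m)) := by
    have tterm : ∀ r ∈ s, Tendsto (fun x : ℝ => c r * x ^ (r - m)) (nhdsWithin 0 (Ioi 0))
        (nhds (if r = m then c r else 0)) := by
      intro r hr
      rcases eq_or_ne r m with h | h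
      · rw [if_pos h, h]
        simp only [sub_self]
        refine Tendsto.congr' ?_ tendsto_const_nhds
        filter_upwards [self_mem_nhdsWithin] with x hx
        rw [Real.rpow_zero, mul_one]
      · simp only [if_neg h]
        have hrm : m < r := lt_of_le_of_ne (s.min'_le r hr) (Ne.symm h)
        have hcont : ContinuousAt (fun x : ℝ => x ^ (r - m)) 0 :=
          Real.continuousAt_rpow_const 0 (r - m) (Or.inr (by linarith))
        have h0 : (0:ℝ) ^ (r - m) = 0 := Real.zero_rpow (by linarith [hrm])
        have h2 : Tendsto (fun x : ℝ => x ^ (r - m)) (nhdsWithin 0 (Ioi 0)) (nhds (0 ^ (r - m))) :=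
          hcont.tendsto.mono_left nhdsWithin_le_nhds
        have := h2.const_mul (c r)
        rw [h0, mul_zero] at this
        exact this
    have h1 := tendsto_finset_sum s tterm
    rw [Finset.sum_ite_eq' s m (fun r => c r), if_pos hms] at h1
    refine h1.congr' ?_
    filter_upwards [self_mem_nhdsWithin] with x hx
    rw [key1, Finset.sum_mul]
    refine Finset.sum_congr rfl (fun r _ => ?_)
    rw [Real.rpow_sub hx, Real.rpow_neg hx.le]
    ring
  have tendstoH0 : Tendsto (fun x : ℝ => (∑ i, a i * p i * x ^ (p i)) * x ^ (-m))
      (nhdsWithin 0 (Ioi 0)) (nhds (c m * m)) := by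
    have tterm : ∀ r ∈ s, Tendsto (fun x : ℝ => (c r * r) * x ^ (r - m)) (nhdsWithin 0 (Ioi 0))
        (nhds (if r = m then c r * r else 0)) := by
      intro r hr
      rcases eq_or_ne r m with h | h
      · rw [if_pos h, h]
        simp only [sub_self]
        refine Tendsto.congr' ?_ tendsto_const_nhds
        filter_upwards [self_mem_nhdsWithin] with x hx
        rw [Real.rpow_zero, mul_one]
      · simp only [if_neg h]
        have hrm : m < r := lt_of_le_of_ne (s.min'_le r hr) (Ne.symm h)
        have hcont : ContinuousAt (fun x : ℝ => x ^ (r - m)) 0 :=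
          Real.continuousAt_rpow_const 0 (r - m) (Or.inr (by linarith))
        have h0 : (0:ℝ) ^ (r - m) = 0 := Real.zero_rpow (by linarith [hrm])
        have h2 : Tendsto (fun x : ℝ => x ^ (r - m)) (nhdsWithin 0 (Ioi 0)) (nhds (0 ^ (r - m))) :=
          hcont.tendsto.mono_left nhdsWithin_le_nhds
        have := h2.const_mul (c r * r)
        rw [h0, mul_zero] at this
        exact this
    have h1 := tendsto_finset_sum s tterm
    rw [Finset.sum_ite_eq' s m (fun r => c r * r), if_pos hms] at h1
    refine h1.congr' ?_
    filter_upwards [self_mem_nhdsWithin] with x hx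
    rw [key2, Finset.sum_mul]
    refine Finset.sum_congr rfl (fun r _ => ?_)
    rw [Real.rpow_sub hx, Real.rpow_neg hx.le]
    ring
  have hcmne : c m ≠ 0 := hcm
  have tendstoG0 : Tendsto (fun x : ℝ => (∑ i, a i * p i * x ^ (p i)) / w x)
      (nhdsWithin 0 (Ioi 0)) (nhds m) := by
    have := tendstoH0.div tendstoW0 hcmne
    have heq : c m * m / c m = m := by field_simp
    rw [heq] at this
    refine this.congr' ?_
    filter_upwards [self_mem_nhdsWithin] with x hx
    simp only [Pi.div_apply]
    rw [mul_div_mul_right _ _ (ne_of_gt (Real.rpow_pos_of_pos hx (-m)))]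
  -- continuity
  set g : ℝ → ℝ := fun x => (∑ i, a i * p i * x ^ (p i)) / w x with hg
  have hrpowCO : ∀ e : ℝ, ContinuousOn (fun x : ℝ => x ^ e) (Ioi (0:ℝ)) := fun e x hx =>
    (Real.continuousAt_rpow_const x e (Or.inl (ne_of_gt hx))).continuousWithinAt
  have hcontg : ContinuousOn g (Ioi 0) := by
    apply ContinuousOn.div
    · exact continuousOn_finset_sum _ fun i _ => continuousOn_const.mul (hrpowCO (p i))
    · have : ContinuousOn (fun x : ℝ => ∑ i, a i * x ^ (p i)) (Ioi 0) :=
        continuousOn_finset_sum _ fun i _ => continuousOn_const.mul (hrpowCO (p i))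
      exact this.congr (fun x _ => hw x)
    · exact fun x hx => ne_of_gt (hwpos x hx)
  -- assemble boundedness
  have htop : ∃ X : ℝ, 0 < X ∧ ∀ x ≥ X, |g x| ≤ |M| + 1 := by
    have := tendstoG_top
    rw [Metric.tendsto_nhds] at this
    have h1 := (this 1 one_pos).and (eventually_gt_atTop (0:ℝ))
    rw [eventually_atTop] at h1
    obtain ⟨X, hX⟩ := h1
    refine ⟨max X 1, by positivity, fun x hx => ?_⟩
    have := hX x (le_trans (le_max_left _ _) hx)
    have hd : |g x - M| < 1 := by simpa [Real.dist_eq] using this.1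
    calc |g x| = |(g x - M) + M| := by ring_nf
    _ ≤ |g x - M| + |M| := abs_add_le _ _
    _ ≤ |M| + 1 := by linarith
  obtain ⟨X, hXpos, hXb⟩ := htop
  have hzero : ∃ δ : ℝ, 0 < δ ∧ ∀ x ∈ Ioo (0:ℝ) δ, |g x| ≤ |m| + 1 := by
    have := tendstoG0
    rw [Metric.tendsto_nhdsWithin_nhds] at this
    obtain ⟨δ, hδpos, hδ⟩ := this 1 one_pos
    refine ⟨δ, hδpos, fun x hx => ?_⟩
    have hdx : dist x 0 < δ := by
      rw [Real.dist_eq, sub_zero, abs_of_pos hx.1]; exact hx.2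
    have := hδ hx.1 hdx
    rw [Real.dist_eq] at this
    calc |g x| = |(g x - m) + m| := by ring_nf
    _ ≤ |g x - m| + |m| := abs_add_le _ _
    _ ≤ |m| + 1 := by linarith
  obtain ⟨δ, hδpos, hδb⟩ := hzero
  have hcompact : ∃ C2 : ℝ, ∀ x ∈ Icc δ X, |g x| ≤ C2 := by
    have hsub : Icc δ X ⊆ Ioi (0:ℝ) := fun x hx => lt_of_lt_of_le hδpos hx.1
    obtain ⟨C2, hC2⟩ := (isCompact_Icc (a := δ) (b := X)).exists_bound_of_continuousOn
        (hcontg.mono hsub)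
    exact ⟨C2, fun x hx => by simpa [Real.norm_eq_abs] using hC2 x hx⟩
  obtain ⟨C2, hC2⟩ := hcompact
  refine ⟨max (max (|M| + 1) (|m| + 1)) C2 + 1, by positivity, fun x hx => ?_⟩
  rcases lt_or_ge x δ with h1 | h1
  · have := hδb x ⟨hx, h1⟩
    calc |g x| ≤ |m| + 1 := this
    _ ≤ max (max (|M| + 1) (|m| + 1)) C2 + 1 := by
        have := le_max_of_le_left (le_max_right (|M| + 1) (|m| + 1)) (c := C2)
        linarith
  · rcases le_or_gt x X with h2 | h2
    · have := hC2 x ⟨h1, h2⟩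
      calc |g x| ≤ C2 := this
      _ ≤ max (max (|M| + 1) (|m| + 1)) C2 + 1 := by
          have := le_max_right (max (|M| + 1) (|m| + 1)) C2
          linarith
    · have := hXb x h2.le
      calc |g x| ≤ |M| + 1 := this
      _ ≤ max (max (|M| + 1) (|m| + 1)) C2 + 1 := by
          have := le_max_of_le_left (le_max_left (|M| + 1) (|m| + 1)) (c := C2)
          linarith

lemma rpow_le_max_pow {x : ℝ} (hx : 0 < x) {e : ℝ} {d : ℕ} (he : 0 ≤ e) (hed : e ≤ (d:ℝ)) :
    x ^ e ≤ max 1 (x ^ d) := by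
  rcases le_total x 1 with h | h
  · exact le_max_of_le_left (Real.rpow_le_one hx.le h he)
  · refine le_max_of_le_right ?_
    rw [← Real.rpow_natCast x d]
    exact Real.rpow_le_rpow_of_exponent_le h hed

/-- If `f(x) = w₁(x) e^{w₂(x)}` is a probability density on `(0,∞)` where
`w₁, w₂` are finite sums of power functions, `w₁ > 0` on `(0,∞)` with all powers `> -1`,
and all powers of `w₂` are positive with highest power `d`, then there is `C > 0` with
`|f'(x)/f(x) · x| ≤ C · max{1, x^d}` for all `x > 0`. -/
theorem stmt_7 (d : ℕ) (m₁ m₂ : ℕ)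
    (a : Fin m₁ → ℝ) (p : Fin m₁ → ℝ) (b : Fin m₂ → ℝ) (q : Fin m₂ → ℝ)
    (w₁ w₂ f : ℝ → ℝ)
    (hw₁ : ∀ x, w₁ x = ∑ i, a i * x ^ (p i))
    (hw₂ : ∀ x, w₂ x = ∑ j, b j * x ^ (q j))
    (hp : ∀ i, -1 < p i)
    (hq : ∀ j, 0 < q j)
    (hqd : ∀ j, q j ≤ (d : ℝ))
    (hd : ∃ j, q j = (d : ℝ))
    (hw₁pos : ∀ x ∈ Ioi (0:ℝ), 0 < w₁ x)
    (hf : ∀ x, f x = w₁ x * Real.exp (w₂ x))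
    (hf_density : ∫ x in Ioi (0:ℝ), f x = 1) :
    ∃ C : ℝ, 0 < C ∧ ∀ x ∈ Ioi (0:ℝ),
      |deriv f x / f x * x| ≤ C * max 1 (x ^ d) := by

  obtain ⟨C₁, hC₁pos, hC₁⟩ := ratio_bounded a p w₁ hw₁ hw₁pos
  set S : ℝ := ∑ j, |b j * q j| with hS
  have hSnn : 0 ≤ S := Finset.sum_nonneg fun j _ => abs_nonneg _
  refine ⟨C₁ + S, by positivity, fun x hx => ?_⟩
  have hx : (0:ℝ) < x := hx
  -- derivatives
  have hw₁fun : w₁ = fun y => ∑ i, a i * y ^ (p i) := funext hw₁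
  have hw₂fun : w₂ = fun y => ∑ j, b j * y ^ (q j) := funext hw₂
  set D₁ : ℝ := ∑ i, a i * (p i * x ^ (p i - 1)) with hD₁
  set D₂ : ℝ := ∑ j, b j * (q j * x ^ (q j - 1)) with hD₂
  have hw1d : HasDerivAt w₁ D₁ x := by
    rw [hw₁fun]
    exact HasDerivAt.fun_sum fun i _ =>
      (Real.hasDerivAt_rpow_const (Or.inl hx.ne')).const_mul (a i)
  have hw2d : HasDerivAt w₂ D₂ x := by
    rw [hw₂fun]
    exact HasDerivAt.fun_sum fun j _ =>
      (Real.hasDerivAt_rpow_const (Or.inl hx.ne')).const_mul (b j)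
  have hffun : f = fun y => w₁ y * Real.exp (w₂ y) := funext hf
  have hfd : HasDerivAt f (D₁ * Real.exp (w₂ x) + w₁ x * (Real.exp (w₂ x) * D₂)) x := by
    rw [hffun]
    exact hw1d.mul hw2d.exp
  have hW : 0 < w₁ x := hw₁pos x hx
  have hE : 0 < Real.exp (w₂ x) := Real.exp_pos _
  have hcalc : deriv f x / f x * x = D₁ * x / w₁ x + D₂ * x := by
    rw [hfd.deriv, hf x]
    field_simp
  have hxp : ∀ e : ℝ, x ^ (e - 1) * x = x ^ e := fun e => by
    rw [Real.rpow_sub hx, Real.rpow_one, div_mul_cancel₀ _ hx.ne']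
  have hD₁x : D₁ * x = ∑ i, a i * p i * x ^ (p i) := by
    rw [hD₁, Finset.sum_mul]
    exact Finset.sum_congr rfl fun i _ => by rw [← hxp (p i)]; ring
  have hD₂x : D₂ * x = ∑ j, b j * q j * x ^ (q j) := by
    rw [hD₂, Finset.sum_mul]
    exact Finset.sum_congr rfl fun j _ => by rw [← hxp (q j)]; ring
  have hmax1 : (1:ℝ) ≤ max 1 (x ^ d) := le_max_left _ _
  have hbound2 : |D₂ * x| ≤ S * max 1 (x ^ d) := by
    rw [hD₂x, hS, Finset.sum_mul]
    refine (Finset.abs_sum_le_sum_abs _ _).trans (Finset.sum_le_sum fun j _ => ?_)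
    rw [abs_mul, abs_of_nonneg (Real.rpow_pos_of_pos hx (q j)).le]
    exact mul_le_mul_of_nonneg_left (rpow_le_max_pow hx (hq j).le (hqd j)) (abs_nonneg _)
  have hbound1 : |D₁ * x / w₁ x| ≤ C₁ * max 1 (x ^ d) := by
    rw [hD₁x]
    calc |(∑ i, a i * p i * x ^ (p i)) / w₁ x| ≤ C₁ := hC₁ x hx
    _ = C₁ * 1 := by ring
    _ ≤ C₁ * max 1 (x ^ d) := by nlinarith
  calc |deriv f x / f x * x| = |D₁ * x / w₁ x + D₂ * x| := by rw [hcalc]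
  _ ≤ |D₁ * x / w₁ x| + |D₂ * x| := abs_add_le _ _
  _ ≤ C₁ * max 1 (x ^ d) + S * max 1 (x ^ d) := add_le_add hbound1 hbound2
  _ = (C₁ + S) * max 1 (x ^ d) := by ring
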